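/- (Consistency bound for the θ-scheme.) Let H be a real Hilbert space, let a < b be real numbers, τ = b − a, and θ ∈ [1/2, 1]. Let u : [a, b] → H be twice continuously differentiable (derivatives in the norm sense). Then ‖(u(b) − u(a))/τ − θ·u′(b) − (1−θ)·u′(a)‖² ≤ θ² · τ · ∫_a^b ‖u″(s)‖² ds. -/

import Mathlib

open MeasureTheory

/-- Cauchy–Schwarz for interval integrals of nonnegative continuous functions. -/
lemma cs_interval_aux {a b : ℝ} (hab : a ≤ b) {f g : ℝ → ℝ}
    (hf : ContinuousOn f (Set.Icc a b)) (hg : ContinuousOn g (Set.Icc a b))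
    (hf0 : ∀ t ∈ Set.Icc a b, 0 ≤ f t) (hg0 : ∀ t ∈ Set.Icc a b, 0 ≤ g t) :
    (∫ t in a..b, f t * g t) ^ 2 ≤ (∫ t in a..b, f t ^ 2) * (∫ t in a..b, g t ^ 2) := by
  set μ := volume.restrict (Set.Ioc a b) with hμ
  have hfin : IsFiniteMeasure μ := by
    constructor
    rw [hμ, Measure.restrict_apply_univ, Real.volume_Ioc]
    exact ENNReal.ofReal_lt_top
  have hsub : Set.Ioc a b ⊆ Set.Icc a b := Set.Ioc_subset_Icc_self
  have hfm : AEStronglyMeasurable f μ :=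
    (hf.mono hsub).aestronglyMeasurable measurableSet_Ioc
  have hgm : AEStronglyMeasurable g μ :=
    (hg.mono hsub).aestronglyMeasurable measurableSet_Ioc
  obtain ⟨Cf, hCf⟩ := isCompact_Icc.exists_bound_of_continuousOn hf
  obtain ⟨Cg, hCg⟩ := isCompact_Icc.exists_bound_of_continuousOn hg
  have hfLp : MemLp f (ENNReal.ofReal 2) μ := by
    refine MemLp.of_bound hfm Cf ?_
    exact (ae_restrict_iff' measurableSet_Ioc).2 (.of_forall fun x hx => hCf x (hsub hx))
  have hgLp : MemLp g (ENNReal.ofReal 2) μ := by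
    refine MemLp.of_bound hgm Cg ?_
    exact (ae_restrict_iff' measurableSet_Ioc).2 (.of_forall fun x hx => hCg x (hsub hx))
  have hf0' : 0 ≤ᵐ[μ] f :=
    (ae_restrict_iff' measurableSet_Ioc).2 (.of_forall fun x hx => hf0 x (hsub hx))
  have hg0' : 0 ≤ᵐ[μ] g :=
    (ae_restrict_iff' measurableSet_Ioc).2 (.of_forall fun x hx => hg0 x (hsub hx))
  have hpq : (2:ℝ).HolderConjugate 2 := Real.HolderConjugate.two_two
  have key := MeasureTheory.integral_mul_le_Lp_mul_Lq_of_nonneg hpq hf0' hg0' hfLp hgLp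
  -- rewrite rpow as pow
  have hfr : ∫ x, f x ^ (2:ℝ) ∂μ = ∫ x, f x ^ 2 ∂μ := by
    refine integral_congr_ae ?_
    filter_upwards [hf0'] with x hx
    rw [← Real.rpow_natCast (f x) 2]; norm_num
  have hgr : ∫ x, g x ^ (2:ℝ) ∂μ = ∫ x, g x ^ 2 ∂μ := by
    refine integral_congr_ae ?_
    filter_upwards [hg0'] with x hx
    rw [← Real.rpow_natCast (g x) 2]; norm_num
  rw [hfr, hgr] at key
  have hA : 0 ≤ ∫ x, f x ^ 2 ∂μ := integral_nonneg fun x => sq_nonneg _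
  have hB : 0 ≤ ∫ x, g x ^ 2 ∂μ := integral_nonneg fun x => sq_nonneg _
  have hI0 : 0 ≤ ∫ x, f x * g x ∂μ := by
    refine integral_nonneg_of_ae ?_
    filter_upwards [hf0', hg0'] with x h1 h2
    exact mul_nonneg h1 h2
  have hsq : ((∫ x, f x ^ 2 ∂μ) ^ ((1:ℝ)/2) * (∫ x, g x ^ 2 ∂μ) ^ ((1:ℝ)/2)) ^ 2
      = (∫ x, f x ^ 2 ∂μ) * (∫ x, g x ^ 2 ∂μ) := by
    rw [mul_pow, ← Real.rpow_natCast ((∫ x, f x ^ 2 ∂μ) ^ ((1:ℝ)/2)) 2,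
      ← Real.rpow_natCast ((∫ x, g x ^ 2 ∂μ) ^ ((1:ℝ)/2)) 2,
      ← Real.rpow_mul hA, ← Real.rpow_mul hB]
    norm_num
  have h2 : (∫ x, f x * g x ∂μ) ^ 2 ≤ (∫ x, f x ^ 2 ∂μ) * (∫ x, g x ^ 2 ∂μ) := by
    rw [← hsq]
    exact pow_le_pow_left₀ hI0 key 2
  rw [intervalIntegral.integral_of_le hab, intervalIntegral.integral_of_le hab,
    intervalIntegral.integral_of_le hab]
  exact h2

theorem theta_scheme_consistency_bound
    {H : Type*} [NormedAddCommGroup H] [InnerProductSpace ℝ H] [CompleteSpace H]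
    (a b : ℝ) (hab : a < b) (τ θ : ℝ) (hτ : τ = b - a)
    (hθ : θ ∈ Set.Icc (1/2 : ℝ) 1)
    (u u' u'' : ℝ → H)
    (hu' : ∀ t ∈ Set.Icc a b, HasDerivWithinAt u (u' t) (Set.Icc a b) t)
    (hu'' : ∀ t ∈ Set.Icc a b, HasDerivWithinAt u' (u'' t) (Set.Icc a b) t)
    (hu''_cont : ContinuousOn u'' (Set.Icc a b)) :
    ‖(1 / τ) • (u b - u a) - θ • u' b - (1 - θ) • u' a‖^2 ≤
      θ^2 * τ * ∫ s in a..b, ‖u'' s‖^2 := by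
  obtain ⟨hthl, hθ1⟩ := hθ
  have hτpos : 0 < τ := by rw [hτ]; linarith
  have hτne : τ ≠ 0 := ne_of_gt hτpos
  set c : ℝ := (1-θ)*b + θ*a with hc
  set w : ℝ → ℝ := fun t => c - t with hwdef
  have hwa : w a = (1-θ)*τ := by simp only [hwdef, hc, hτ]; ring
  have hwb : w b = -(θ*τ) := by simp only [hwdef, hc, hτ]; ring
  have hWcont : Continuous w := by fun_prop
  have hu_cont : ContinuousOn u (Set.Icc a b) := fun t ht => (hu' t ht).continuousWithinAt
  have hu'_cont : ContinuousOn u' (Set.Icc a b) := fun t ht => (hu'' t ht).continuousWithinAt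
  set F : ℝ → H := fun t => u t + w t • u' t with hFdef
  have hFcont : ContinuousOn F (Set.Icc a b) :=
    hu_cont.add (hWcont.continuousOn.smul hu'_cont)
  have hderiv : ∀ t ∈ Set.Ioo a b, HasDerivAt F (w t • u'' t) t := by
    intro t ht
    have hmem : Set.Icc a b ∈ nhds t := Icc_mem_nhds ht.1 ht.2
    have h1 : HasDerivAt u (u' t) t :=
      (hu' t (Set.Ioo_subset_Icc_self ht)).hasDerivAt hmem
    have h2 : HasDerivAt u' (u'' t) t :=
      (hu'' t (Set.Ioo_subset_Icc_self ht)).hasDerivAt hmem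
    have hw' : HasDerivAt w (-1) t := by
      simpa using (hasDerivAt_id t).const_sub c
    have h3 := h1.add (hw'.smul h2)
    convert h3 using 1
    · rfl
    rw [neg_one_smul]
    abel
  have hint : IntervalIntegrable (fun t => w t • u'' t) volume a b := by
    apply ContinuousOn.intervalIntegrable
    rw [Set.uIcc_of_le hab.le]
    exact hWcont.continuousOn.smul hu''_cont
  have key : ∫ t in a..b, w t • u'' t = F b - F a :=
    intervalIntegral.integral_eq_sub_of_hasDeriv_right_of_le hab.le hFcont
      (fun t ht => (hderiv t ht).hasDerivWithinAt) hint
  -- relate to the consistency error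
  have hV : (1 / τ) • (u b - u a) - θ • u' b - (1 - θ) • u' a
      = (1/τ) • ∫ t in a..b, w t • u'' t := by
    rw [key, hFdef]
    simp only [hwa, hwb]
    match_scalars <;> (field_simp; try ring)
  rw [hV]
  have hnorm : ‖(1/τ) • ∫ t in a..b, w t • u'' t‖
      ≤ (1/τ) * ∫ t in a..b, |w t| * ‖u'' t‖ := by
    rw [norm_smul, Real.norm_of_nonneg (by positivity : (0:ℝ) ≤ 1/τ)]
    gcongr
    calc ‖∫ t in a..b, w t • u'' t‖ ≤ ∫ t in a..b, ‖w t • u'' t‖ :=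
          intervalIntegral.norm_integral_le_integral_norm hab.le
      _ = ∫ t in a..b, |w t| * ‖u'' t‖ := by
          apply intervalIntegral.integral_congr
          intro t _
          simp [norm_smul]
  -- Cauchy–Schwarz
  have hcs : (∫ t in a..b, |w t| * ‖u'' t‖) ^ 2
      ≤ (∫ t in a..b, |w t| ^ 2) * (∫ t in a..b, ‖u'' t‖ ^ 2) := by
    apply cs_interval_aux hab.le (hWcont.abs.continuousOn) hu''_cont.norm
    · intro t _; exact abs_nonneg _
    · intro t _; exact norm_nonneg _
  -- compute ∫ w²
  have hw2 : ∫ t in a..b, |w t| ^ 2 = (((1-θ)^3 + θ^3) * τ^3) / 3 := by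
    have : ∀ t, |w t| ^ 2 = (c - t)^2 := by intro t; rw [sq_abs]
    simp_rw [this]
    have hD : ∀ t : ℝ, HasDerivAt (fun s => -(c - s)^3/3) ((c - t)^2) t := by
      intro t
      have h := ((hasDerivAt_id t).const_sub c).pow 3
      have h2 := (h.neg).div_const 3
      refine h2.congr_deriv ?_
      simp only [id_eq]
      push_cast
      ring
    rw [intervalIntegral.integral_eq_sub_of_hasDerivAt (fun t _ => hD t)
      (by apply ContinuousOn.intervalIntegrable; fun_prop)]
    have hca : c - a = (1-θ)*τ := by rw [hc, hτ]; ring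
    have hcb : c - b = -(θ*τ) := by rw [hc, hτ]; ring
    rw [hca, hcb]
    ring
  have hg2 : 0 ≤ ∫ t in a..b, ‖u'' t‖ ^ 2 :=
    intervalIntegral.integral_nonneg hab.le (fun t _ => sq_nonneg _)
  have hI0 : 0 ≤ ∫ t in a..b, |w t| * ‖u'' t‖ :=
    intervalIntegral.integral_nonneg hab.le
      (fun t _ => mul_nonneg (abs_nonneg _) (norm_nonneg _))
  calc ‖(1/τ) • ∫ t in a..b, w t • u'' t‖ ^ 2
      ≤ ((1/τ) * ∫ t in a..b, |w t| * ‖u'' t‖) ^ 2 := by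
        apply pow_le_pow_left₀ (norm_nonneg _) hnorm
    _ = (1/τ)^2 * (∫ t in a..b, |w t| * ‖u'' t‖) ^ 2 := by ring
    _ ≤ (1/τ)^2 * ((∫ t in a..b, |w t| ^ 2) * (∫ t in a..b, ‖u'' t‖ ^ 2)) := by
        gcongr
    _ = (1/τ)^2 * ((((1-θ)^3 + θ^3) * τ^3) / 3) * (∫ t in a..b, ‖u'' t‖ ^ 2) := by
        rw [hw2]; ring
    _ ≤ θ^2 * τ * ∫ s in a..b, ‖u'' s‖^2 := by
        apply mul_le_mul_of_nonneg_right _ hg2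
        have h1 : (1-θ)^3 + θ^3 ≤ 3 * θ^2 := by nlinarith [sq_nonneg (1-θ), sq_nonneg θ]
        have h2 : (1/τ)^2 * (((1-θ)^3 + θ^3) * τ^3 / 3) = ((1-θ)^3 + θ^3)/3 * τ := by
          field_simp
        rw [h2]
        nlinarith [mul_nonneg (by linarith : (0:ℝ) ≤ 3*θ^2 - ((1-θ)^3+θ^3)) hτpos.le]
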